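/- Let X be a finite topological T₀-space and let φ : ℝ≥0 × X → X be a semiflow. Then the time-t maps for positive times all coincide: for all s, t ∈ ℝ≥0 with s > 0 and t > 0 and every x ∈ X, φ(s,x) = φ(t,x). -/

import Mathlib

open NNReal

/-- A semiflow on a topological space `X`: a jointly continuous map
`φ : ℝ≥0 × X → X` with `φ 0 x = x` and `φ s (φ t x) = φ (s + t) x`. -/
def IsSemiflow {X : Type*} [TopologicalSpace X] (φ : ℝ≥0 → X → X) : Prop :=
  Continuous (fun p : ℝ≥0 × X => φ p.1 p.2) ∧
  (∀ x : X, φ 0 x = x) ∧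
  ∀ (s t : ℝ≥0) (x : X), φ s (φ t x) = φ (s + t) x

/-- A semiflow is trivial if every time-`t` map is the identity. -/
def IsTrivialSemiflow {X : Type*} [TopologicalSpace X] (φ : ℝ≥0 → X → X) : Prop :=
  ∀ (t : ℝ≥0) (x : X), φ t x = x

/-- `x` is a down beat point: `U_x \ {x}` has a greatest element in the
specialization order (`y ⤳ x` means `y ≤ x`, i.e. `y ∈ U_x`). -/
def IsDownBeatPoint {X : Type*} [TopologicalSpace X] (x : X) : Prop :=
  ∃ m : X, (m ⤳ x ∧ m ≠ x) ∧ ∀ y : X, y ⤳ x → y ≠ x → y ⤳ m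

/-- `x` is an up beat point: `F_x \ {x}` has a least element in the
specialization order. -/
def IsUpBeatPoint {X : Type*} [TopologicalSpace X] (x : X) : Prop :=
  ∃ m : X, (x ⤳ m ∧ m ≠ x) ∧ ∀ y : X, x ⤳ y → y ≠ x → m ⤳ y

private lemma iterate_of_idem {Y : Type*} (g : Y → Y) (hg : g ∘ g = g) :
    ∀ j, 0 < j → g^[j] = g := by
  intro j hj
  induction j with
  | zero => omega
  | succ j ih =>
    rcases Nat.eq_zero_or_pos j with h | h
    · subst h; simp
    · rw [Function.iterate_succ', ih h, hg]

private lemma exists_idem_iterate {Y : Type*} [Finite Y] (f : Y → Y) :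
    ∃ n, 0 < n ∧ f^[n] ∘ f^[n] = f^[n] := by
  obtain ⟨i, j, hne, hij⟩ := Finite.exists_ne_map_eq_of_infinite (fun n : ℕ => f^[n])
  have hij' : f^[i] = f^[j] := hij
  clear hij
  wlog hlt : i < j generalizing i j
  · exact this j i hne.symm hij'.symm (by omega)
  set p := j - i with hp
  have hp0 : 0 < p := by omega
  have hbase : f^[i + p] = f^[i] := by
    rw [show i + p = j by omega]; exact hij'.symm
  have hstep : ∀ m, i ≤ m → f^[m + p] = f^[m] := by
    intro m him
    calc f^[m + p] = f^[m - i] ∘ f^[i + p] := by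
          rw [show m + p = (m - i) + (i + p) by omega, Function.iterate_add]
      _ = f^[m - i] ∘ f^[i] := by rw [hbase]
      _ = f^[m] := by rw [← Function.iterate_add, show m - i + i = m by omega]
  have hkey : ∀ m, i ≤ m → ∀ k, f^[m + k * p] = f^[m] := by
    intro m him k
    induction k with
    | zero => simp
    | succ k ih =>
      have e1 : m + (k + 1) * p = (m + k * p) + p := by ring
      rw [e1, hstep (m + k * p) (le_trans him (Nat.le_add_right m _)), ih]
  refine ⟨(i + 1) * p, Nat.mul_pos (Nat.succ_pos i) hp0, ?_⟩
  have hile : i ≤ (i + 1) * p := by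
    have := Nat.le_mul_of_pos_right (i + 1) hp0
    omega
  rw [← Function.iterate_add f]
  exact hkey ((i + 1) * p) hile (i + 1)

/-- For a semiflow on a finite `T₀`-space, all time-`t` maps for positive
times coincide. -/
theorem semiflow_eq_of_pos {X : Type*} [TopologicalSpace X] [Finite X] [T0Space X]
    (φ : ℝ≥0 → X → X) (hφ : IsSemiflow φ) (s t : ℝ≥0) (hs : 0 < s) (ht : 0 < t) :
    ∀ x : X, φ s x = φ t x := by
  classical
  obtain ⟨hc, h0, hadd⟩ := hφ
  -- iterates of the time-`u` map
  have hiter : ∀ (n : ℕ) (u : ℝ≥0) (x : X), φ ((n : ℝ≥0) * u) x = (φ u)^[n] x := by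
    intro n
    induction n with
    | zero => intro u x; simpa using h0 x
    | succ n ih =>
      intro u x
      have hcast : ((n + 1 : ℕ) : ℝ≥0) * u = u + (n : ℝ≥0) * u := by push_cast; ring
      rw [hcast, ← hadd u ((n : ℝ≥0) * u) x, ih, Function.iterate_succ_apply']
  -- a uniform idempotent power
  haveI : Fintype (X → X) := Fintype.ofFinite _
  choose n hn1 hn2 using fun f : X → X => exists_idem_iterate f
  set K := ∏ f : X → X, n f with hK
  have hKpos : 0 < K := Finset.prod_pos (fun f _ => hn1 f)
  have hKidem : ∀ f : X → X, f^[K] ∘ f^[K] = f^[K] := by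
    intro f
    obtain ⟨m, hm⟩ : n f ∣ K := Finset.dvd_prod_of_mem n (Finset.mem_univ f)
    have hm1 : 0 < m := by
      rcases Nat.eq_zero_or_pos m with h | h
      · subst h; simp at hm; omega
      · exact h
    rw [hm, Function.iterate_mul, iterate_of_idem _ (hn2 f) m hm1]
    exact hn2 f
  -- every time map is idempotent
  have hidem : ∀ u : ℝ≥0, φ u ∘ φ u = φ u := by
    intro u
    have hKne : (K : ℝ≥0) ≠ 0 := Nat.cast_ne_zero.mpr hKpos.ne'
    have hu : (K : ℝ≥0) * (u / K) = u := mul_div_cancel₀ u hKne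
    funext x
    have h1 : ∀ y : X, φ u y = (φ (u / K))^[K] y := fun y => by
      rw [← hiter K (u / K) y, hu]
    show φ u (φ u x) = φ u x
    calc φ u (φ u x) = (φ (u / K))^[K] ((φ (u / K))^[K] x) := by
          rw [h1 (φ u x), h1 x]
      _ = (φ (u / K))^[K] x := congrFun (hKidem (φ (u / K))) x
      _ = φ u x := (h1 x).symm
  -- positive natural multiples don't change the time map
  have hmul : ∀ (m : ℕ), 0 < m → ∀ (u : ℝ≥0) (x : X), φ ((m : ℝ≥0) * u) x = φ u x := by
    intro m hm u x
    rw [hiter m u x, iterate_of_idem (φ u) (hidem u) m hm]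
  -- rational multiples (a/b) don't change the time map
  have hrat : ∀ (a b : ℕ), 0 < a → 0 < b → ∀ (u : ℝ≥0) (x : X),
      φ ((a : ℝ≥0) * (u / b)) x = φ u x := by
    intro a b ha hb u x
    have hbne : (b : ℝ≥0) ≠ 0 := Nat.cast_ne_zero.mpr hb.ne'
    calc φ ((a : ℝ≥0) * (u / b)) x = φ (u / b) x := hmul a ha (u / b) x
      _ = φ ((b : ℝ≥0) * (u / b)) x := (hmul b hb (u / b) x).symm
      _ = φ u x := by rw [mul_div_cancel₀ u hbne]
  -- mutual specialization via density
  have hspec : ∀ (s' t' : ℝ≥0), 0 < s' → 0 < t' → ∀ x : X, φ t' x ⤳ φ s' x := by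
    intro s' t' hs' ht' x
    rw [specializes_iff_forall_open]
    intro U hU hmem
    have hcont : Continuous (fun u : ℝ≥0 => φ u x) :=
      hc.comp (continuous_id.prodMk continuous_const)
    have hV : IsOpen ((fun u : ℝ≥0 => φ u x) ⁻¹' U) := hU.preimage hcont
    obtain ⟨ε, hε, hball⟩ := Metric.isOpen_iff.mp hV s' hmem
    have hεnn : (0 : ℝ≥0) < ε.toNNReal := Real.toNNReal_pos.mpr hε
    obtain ⟨b, hb⟩ := exists_nat_gt (t' / ε.toNNReal)
    have hbpos : 0 < b := by
      by_contra h
      push_neg at h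
      interval_cases b
      simp at hb
    have hbne : (b : ℝ≥0) ≠ 0 := Nat.cast_ne_zero.mpr hbpos.ne'
    set u := t' / b with hu
    have hupos : 0 < u := by positivity
    have hult : u < ε.toNNReal := by
      rw [hu, div_lt_iff₀ (hbne.bot_lt), mul_comm]
      exact (div_lt_iff₀ hεnn).mp hb
    set a := ⌊s' / u⌋₊ + 1 with ha
    have hapos : 0 < a := Nat.succ_pos _
    have h1 : s' < (a : ℝ≥0) * u := by
      have := Nat.lt_floor_add_one (s' / u)
      rw [div_lt_iff₀ hupos] at this
      calc s' < (⌊s' / u⌋₊ + 1 : ℝ≥0) * u := this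
        _ = (a : ℝ≥0) * u := by push_cast [ha]; ring_nf
    have h2 : (a : ℝ≥0) * u ≤ s' + u := by
      have hfl : (⌊s' / u⌋₊ : ℝ≥0) ≤ s' / u := Nat.floor_le zero_le
      calc (a : ℝ≥0) * u = (⌊s' / u⌋₊ : ℝ≥0) * u + u := by push_cast [ha]; ring
        _ ≤ (s' / u) * u + u := by
            gcongr
        _ = s' + u := by rw [div_mul_cancel₀ _ hupos.ne']
    have hmemball : (a : ℝ≥0) * u ∈ Metric.ball s' ε := by
      rw [Metric.mem_ball, NNReal.dist_eq]
      have hcoe1 : (s' : ℝ) < ((a : ℝ≥0) * u : ℝ≥0) := by exact_mod_cast h1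
      have hcoe2 : (((a : ℝ≥0) * u : ℝ≥0) : ℝ) ≤ (s' : ℝ) + u := by exact_mod_cast h2
      have hcoe3 : (u : ℝ) < ε := by
        have := (NNReal.coe_lt_coe).mpr hult
        rwa [Real.coe_toNNReal _ hε.le] at this
      rw [abs_of_pos (by linarith)]
      linarith
    have : φ ((a : ℝ≥0) * u) x ∈ U := hball hmemball
    rwa [hu, hrat a b hapos hbpos t' x] at this
  intro x
  exact ((hspec t s ht hs x).antisymm (hspec s t hs ht x)).eq
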